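/- Let {f_X} be a universal₂ family of hash functions from a finite set A to {1,…,M}. Then for any joint distribution P^{A,E} on A × E (E finite) and any s ∈ (0,1], the expected conditional Shannon entropy satisfies E_X H(f_X(A)|E) ≥ log M − (1/s)·M^s·e^{−H̃_{1+s}(A|E)}, where H̃_{1+s}(A|E) := −log ∑_{a,e} P^{A,E}(a,e)^{1+s} P^E(e)^{−s}. -/

import Mathlib

open Real Finset

lemma aux_rpow_add_le {s : ℝ} (hs0 : 0 ≤ s) (hs1 : s ≤ 1) {x y : ℝ} (hx : 0 ≤ x) (hy : 0 ≤ y) :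
    (x + y) ^ s ≤ x ^ s + y ^ s := by
  have h := NNReal.rpow_add_le_add_rpow (⟨x, hx⟩ : NNReal) ⟨y, hy⟩ hs0 hs1
  have := NNReal.coe_le_coe.2 h
  push_cast [NNReal.coe_rpow] at this
  exact this

lemma aux_rpow_one_add {s x : ℝ} (hs : 0 < s) (hx : 0 ≤ x) : x ^ (1 + s) = x * x ^ s := by
  rcases eq_or_lt_of_le hx with h | h
  · rw [← h, Real.zero_rpow (by positivity), zero_mul]
  · rw [Real.rpow_add h, Real.rpow_one]

lemma aux_pt {M : ℝ} (hM : 1 ≤ M) {s : ℝ} (hs0 : 0 < s) {q w : ℝ}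
    (hq : 0 ≤ q) (hqw : q ≤ w) :
    q * Real.log M - (1 / s) * (M ^ s * q ^ (1 + s) * w ^ (-s) - q)
      ≤ -(q * Real.log (q / w)) := by
  rcases eq_or_lt_of_le hq with h0 | h0
  · simp [← h0, Real.zero_rpow (by positivity : (1:ℝ) + s ≠ 0)]
  · have hw : 0 < w := lt_of_lt_of_le h0 hqw
    have hMpos : (0:ℝ) < M := by linarith
    have hx : 0 < M * q / w := by positivity
    have key : Real.log (M * q / w) ≤ (1 / s) * ((M * q / w) ^ s - 1) := by
      have h1 : s * Real.log (M * q / w) ≤ (M * q / w) ^ s - 1 := by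
        rw [← Real.log_rpow hx]
        exact Real.log_le_sub_one_of_pos (Real.rpow_pos_of_pos hx s)
      calc Real.log (M * q / w) = (1 / s) * (s * Real.log (M * q / w)) := by field_simp
        _ ≤ (1 / s) * ((M * q / w) ^ s - 1) := by
            apply mul_le_mul_of_nonneg_left h1; positivity
    have e1 : M ^ s * q ^ (1 + s) * w ^ (-s) = q * (M * q / w) ^ s := by
      rw [Real.div_rpow (by positivity) hw.le, Real.mul_rpow hMpos.le hq,
        Real.rpow_neg hw.le, Real.rpow_add h0, Real.rpow_one]
      field_simp
    have e2 : Real.log (q / w) = Real.log (M * q / w) - Real.log M := by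
      rw [show M * q / w = M * (q / w) by ring,
        Real.log_mul hMpos.ne' (by positivity : (q / w) ≠ 0)]
      ring
    have h2 : q * Real.log (M * q / w) ≤ (1 / s) * (q * (M * q / w) ^ s - q) := by
      calc q * Real.log (M * q / w) ≤ q * ((1 / s) * ((M * q / w) ^ s - 1)) :=
            mul_le_mul_of_nonneg_left key hq
        _ = (1 / s) * (q * (M * q / w) ^ s - q) := by ring
    rw [e1, e2]
    linarith

theorem expected_cond_entropy_hash_bound
    {A E Ω : Type*} [Fintype A] [Fintype E] [Fintype Ω] [DecidableEq A]
    (M : ℕ) (hM : 0 < M)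
    (μ : Ω → ℝ) (hμ : ∀ ω, 0 ≤ μ ω) (hμ1 : ∑ ω, μ ω = 1)
    (f : Ω → A → Fin M)
    (huniv : ∀ a₁ a₂ : A, a₁ ≠ a₂ →
      ∑ ω ∈ univ.filter (fun ω => f ω a₁ = f ω a₂), μ ω ≤ 1 / M)
    (P : A × E → ℝ) (hP : ∀ p, 0 ≤ P p) (hP1 : ∑ p, P p = 1)
    (s : ℝ) (hs0 : 0 < s) (hs1 : s ≤ 1) :
    Real.log M - (1 / s) * (M : ℝ) ^ s *
        Real.exp (-(-Real.log (∑ a, ∑ e, P (a, e) ^ (1 + s) * (∑ a', P (a', e)) ^ (-s))))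
      ≤ ∑ ω, μ ω *
          (-∑ i : Fin M, ∑ e,
            (∑ a ∈ univ.filter (fun a => f ω a = i), P (a, e)) *
              Real.log ((∑ a ∈ univ.filter (fun a => f ω a = i), P (a, e)) /
                (∑ a', P (a', e)))) := by
  have hMR : (1:ℝ) ≤ (M:ℝ) := by exact_mod_cast hM
  have hMpos : (0:ℝ) < (M:ℝ) := by linarith
  obtain ⟨W, hW⟩ : ∃ W : E → ℝ, ∀ e, W e = ∑ a', P (a', e) := ⟨_, fun _ => rfl⟩
  obtain ⟨Q, hQ⟩ : ∃ Q : Ω → Fin M → E → ℝ,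
      ∀ ω i e, Q ω i e = ∑ a ∈ univ.filter (fun a => f ω a = i), P (a, e) :=
    ⟨_, fun _ _ _ => rfl⟩
  simp only [← hW, ← hQ]
  -- basic facts
  have hWnn : ∀ e, 0 ≤ W e := fun e => by
    rw [hW]; exact Finset.sum_nonneg fun a _ => hP _
  have hPW : ∀ a e, P (a, e) ≤ W e := fun a e => by
    rw [hW]
    exact Finset.single_le_sum (f := fun a' => P (a', e)) (fun a' _ => hP _) (mem_univ a)
  have hQnn : ∀ ω i e, 0 ≤ Q ω i e := fun ω i e => by
    rw [hQ]; exact Finset.sum_nonneg fun a _ => hP _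
  have hQW : ∀ ω i e, Q ω i e ≤ W e := fun ω i e => by
    rw [hQ, hW]
    exact Finset.sum_le_sum_of_subset_of_nonneg (filter_subset _ _) fun a _ _ => hP _
  have hQfib : ∀ ω e, ∑ i, Q ω i e = W e := fun ω e => by
    simp only [hQ, hW]; exact Finset.sum_fiberwise _ _ _
  have hWsum : ∑ e, W e = 1 := by
    simp only [hW]; rw [Finset.sum_comm, ← Fintype.sum_prod_type]; exact hP1
  have hQ1 : ∀ ω, ∑ i : Fin M, ∑ e, Q ω i e = 1 := fun ω => by
    rw [Finset.sum_comm, Finset.sum_congr rfl fun e _ => hQfib ω e, hWsum]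
  set T := ∑ a, ∑ e, P (a, e) ^ (1 + s) * W e ^ (-s) with hT
  have hTpos : 0 < T := by
    obtain ⟨⟨a₀, e₀⟩, hp⟩ : ∃ p, 0 < P p := by
      by_contra h
      push_neg at h
      have : ∑ p, P p ≤ 0 := Finset.sum_nonpos fun p _ => h p
      linarith [hP1]
    have hterm : ∀ a e, 0 ≤ P (a, e) ^ (1 + s) * W e ^ (-s) := fun a e =>
      mul_nonneg (Real.rpow_nonneg (hP _) _) (Real.rpow_nonneg (hWnn _) _)
    apply Finset.sum_pos' (fun a _ => Finset.sum_nonneg fun e _ => hterm a e)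
    refine ⟨a₀, mem_univ _, Finset.sum_pos' (fun e _ => hterm a₀ e) ⟨e₀, mem_univ _, ?_⟩⟩
    have hWe : 0 < W e₀ := lt_of_lt_of_le hp (hPW a₀ e₀)
    exact mul_pos (Real.rpow_pos_of_pos hp _) (Real.rpow_pos_of_pos hWe _)
  rw [neg_neg, Real.exp_log hTpos]
  obtain ⟨S, hS⟩ : ∃ S : Ω → ℝ,
      ∀ ω, S ω = ∑ i : Fin M, ∑ e, Q ω i e ^ (1 + s) * W e ^ (-s) := ⟨_, fun _ => rfl⟩
  -- Step A
  have stepA : ∀ ω, Real.log M - (1 / s) * ((M:ℝ) ^ s * S ω - 1)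
      ≤ -∑ i : Fin M, ∑ e, Q ω i e * Real.log (Q ω i e / W e) := by
    intro ω
    have hsum : ∑ i : Fin M, ∑ e,
        (Q ω i e * Real.log M - (1 / s) * ((M:ℝ) ^ s * Q ω i e ^ (1 + s) * W e ^ (-s) - Q ω i e))
        ≤ ∑ i : Fin M, ∑ e, -(Q ω i e * Real.log (Q ω i e / W e)) := by
      refine Finset.sum_le_sum fun i _ => Finset.sum_le_sum fun e _ => ?_
      exact aux_pt hMR hs0 (hQnn ω i e) (hQW ω i e)
    simp only [Finset.sum_neg_distrib] at hsum
    refine le_trans (le_of_eq ?_) hsum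
    simp only [Finset.sum_sub_distrib, ← Finset.sum_mul, ← Finset.mul_sum, mul_assoc]
    rw [hQ1 ω, one_mul, ← hS ω]
  -- Step B
  have stepB : ∑ ω, μ ω * S ω ≤ T + (M:ℝ) ^ (-s) := by
    obtain ⟨R, hR⟩ : ∃ R : Ω → A → E → ℝ, ∀ ω a e,
        R ω a e = ∑ a' ∈ univ.filter (fun a' => a' ≠ a ∧ f ω a' = f ω a), P (a', e) :=
      ⟨_, fun _ _ _ => rfl⟩
    have hRnn : ∀ ω a e, 0 ≤ R ω a e := fun ω a e => by
      rw [hR]; exact Finset.sum_nonneg fun a' _ => hP _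
    have hsplit : ∀ ω a e, Q ω (f ω a) e = P (a, e) + R ω a e := by
      intro ω a e
      rw [hQ, hR]
      have ha : a ∈ univ.filter (fun a' => f ω a' = f ω a) := by simp
      rw [← Finset.add_sum_erase _ _ ha]
      congr 1
      apply Finset.sum_congr ?_ fun _ _ => rfl
      ext a'
      simp [Finset.mem_erase, and_comm]
    have hQpow : ∀ ω e, ∑ i : Fin M, Q ω i e ^ (1 + s)
        = ∑ a, P (a, e) * Q ω (f ω a) e ^ s := by
      intro ω e
      have h1 : ∀ i : Fin M, Q ω i e ^ (1 + s)
          = ∑ a ∈ univ.filter (fun a => f ω a = i), P (a, e) * Q ω (f ω a) e ^ s := by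
        intro i
        calc Q ω i e ^ (1 + s) = Q ω i e * Q ω i e ^ s := aux_rpow_one_add hs0 (hQnn ω i e)
          _ = ∑ a ∈ univ.filter (fun a => f ω a = i), P (a, e) * Q ω i e ^ s := by
              rw [← Finset.sum_mul, ← hQ]
          _ = ∑ a ∈ univ.filter (fun a => f ω a = i), P (a, e) * Q ω (f ω a) e ^ s :=
              Finset.sum_congr rfl fun a ha => by rw [(Finset.mem_filter.1 ha).2]
      rw [Finset.sum_congr rfl fun i _ => h1 i]
      exact Finset.sum_fiberwise _ _ _
    have hQpowle : ∀ ω e, ∑ i : Fin M, Q ω i e ^ (1 + s)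
        ≤ ∑ a, P (a, e) * (P (a, e) ^ s + R ω a e ^ s) := by
      intro ω e
      rw [hQpow ω e]
      refine Finset.sum_le_sum fun a _ => mul_le_mul_of_nonneg_left ?_ (hP _)
      rw [hsplit ω a e]
      exact aux_rpow_add_le hs0.le hs1 (hP _) (hRnn ω a e)
    have hRexp : ∀ a e, ∑ ω, μ ω * R ω a e ≤ W e / M := by
      intro a e
      have h1 : ∀ ω, R ω a e
          = ∑ a' ∈ univ.erase a, if f ω a' = f ω a then P (a', e) else 0 := by
        intro ω
        rw [hR, ← Finset.sum_filter]
        congr 1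
        ext a'
        simp [and_comm]
      calc ∑ ω, μ ω * R ω a e
          = ∑ a' ∈ univ.erase a, ∑ ω, μ ω * (if f ω a' = f ω a then P (a', e) else 0) := by
            simp only [h1, Finset.mul_sum]
            rw [Finset.sum_comm]
        _ ≤ ∑ a' ∈ univ.erase a, P (a', e) * (1 / M) := by
            refine Finset.sum_le_sum fun a' ha' => ?_
            have hne : a' ≠ a := (Finset.mem_erase.1 ha').1
            have h2 : ∑ ω, μ ω * (if f ω a' = f ω a then P (a', e) else 0)
                = (∑ ω ∈ univ.filter (fun ω => f ω a' = f ω a), μ ω) * P (a', e) := by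
              rw [Finset.sum_mul, Finset.sum_filter]
              refine Finset.sum_congr rfl fun ω _ => ?_
              by_cases h : f ω a' = f ω a <;> simp [h]
            rw [h2, mul_comm (P (a', e))]
            exact mul_le_mul_of_nonneg_right (huniv a' a hne) (hP _)
        _ ≤ W e * (1 / M) := by
            rw [← Finset.sum_mul]
            refine mul_le_mul_of_nonneg_right ?_ (by positivity : (0:ℝ) ≤ 1 / (M:ℝ))
            rw [hW]
            exact Finset.sum_le_sum_of_subset_of_nonneg (Finset.subset_univ _)
              fun _ _ _ => hP _
        _ = W e / M := by ring
    have hJensen : ∀ a e, ∑ ω, μ ω * R ω a e ^ s ≤ (W e / M) ^ s := by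
      intro a e
      have hcc : ConcaveOn ℝ (Set.Ici 0) fun x : ℝ => x ^ s :=
        Real.concaveOn_rpow hs0.le hs1
      have h := hcc.le_map_sum (t := univ) (w := μ) (p := fun ω => R ω a e)
        (fun ω _ => hμ ω) hμ1 (fun ω _ => Set.mem_Ici.2 (hRnn ω a e))
      simp only [smul_eq_mul] at h
      refine le_trans h ?_
      exact Real.rpow_le_rpow
        (Finset.sum_nonneg fun ω _ => mul_nonneg (hμ ω) (hRnn ω a e)) (hRexp a e) hs0.le
    have hEe : ∀ e, ∑ ω, μ ω * ((∑ i : Fin M, Q ω i e ^ (1 + s)) * W e ^ (-s))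
        ≤ (∑ a, P (a, e) ^ (1 + s) * W e ^ (-s)) + W e * (M:ℝ) ^ (-s) := by
      intro e
      rcases eq_or_lt_of_le (hWnn e) with hWe | hWe
      · have hQz : ∀ ω i, Q ω i e = 0 := fun ω i =>
          le_antisymm (le_of_le_of_eq (hQW ω i e) hWe.symm) (hQnn ω i e)
        rw [← hWe]
        simp [hQz, Real.zero_rpow (ne_of_gt (by linarith : (0:ℝ) < 1 + s)),
          Real.zero_rpow (neg_ne_zero.2 hs0.ne')]
      · have key : ∑ ω, μ ω * (∑ i : Fin M, Q ω i e ^ (1 + s))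
            ≤ (∑ a, P (a, e) ^ (1 + s)) + W e * (W e / M) ^ s := by
          calc ∑ ω, μ ω * (∑ i : Fin M, Q ω i e ^ (1 + s))
              ≤ ∑ ω, μ ω * (∑ a, P (a, e) * (P (a, e) ^ s + R ω a e ^ s)) :=
                Finset.sum_le_sum fun ω _ =>
                  mul_le_mul_of_nonneg_left (hQpowle ω e) (hμ ω)
            _ = (∑ a, P (a, e) * P (a, e) ^ s)
                + ∑ a, P (a, e) * (∑ ω, μ ω * R ω a e ^ s) := by
                have hterm : ∀ ω, μ ω * (∑ a, P (a, e) * (P (a, e) ^ s + R ω a e ^ s))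
                    = μ ω * (∑ a, P (a, e) * P (a, e) ^ s)
                      + ∑ a, P (a, e) * (μ ω * R ω a e ^ s) := by
                  intro ω
                  simp only [mul_add, Finset.sum_add_distrib, Finset.mul_sum]
                  congr 1
                  exact Finset.sum_congr rfl fun a _ => by ring
                rw [Finset.sum_congr rfl fun ω _ => hterm ω, Finset.sum_add_distrib,
                  ← Finset.sum_mul, hμ1, one_mul]
                congr 1
                rw [Finset.sum_comm]
                exact Finset.sum_congr rfl fun a _ => by rw [← Finset.mul_sum]
            _ ≤ (∑ a, P (a, e) * P (a, e) ^ s) + ∑ a, P (a, e) * (W e / M) ^ s := by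
                refine add_le_add_right (Finset.sum_le_sum fun a _ =>
                  mul_le_mul_of_nonneg_left (hJensen a e) (hP _)) _
            _ = (∑ a, P (a, e) ^ (1 + s)) + W e * (W e / M) ^ s := by
                congr 1
                · exact Finset.sum_congr rfl fun a _ => (aux_rpow_one_add hs0 (hP _)).symm
                · rw [← Finset.sum_mul, ← hW]
        have hWs : 0 ≤ W e ^ (-s) := Real.rpow_nonneg (hWnn e) _
        calc ∑ ω, μ ω * ((∑ i : Fin M, Q ω i e ^ (1 + s)) * W e ^ (-s))
            = (∑ ω, μ ω * (∑ i : Fin M, Q ω i e ^ (1 + s))) * W e ^ (-s) := by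
              simp only [← mul_assoc]
              rw [← Finset.sum_mul]
          _ ≤ ((∑ a, P (a, e) ^ (1 + s)) + W e * (W e / M) ^ s) * W e ^ (-s) :=
              mul_le_mul_of_nonneg_right key hWs
          _ = (∑ a, P (a, e) ^ (1 + s) * W e ^ (-s)) + W e * (M:ℝ) ^ (-s) := by
              rw [add_mul, Finset.sum_mul]
              congr 1
              rw [Real.div_rpow (hWnn e) hMpos.le, Real.rpow_neg (hWnn e),
                Real.rpow_neg hMpos.le]
              field_simp [ne_of_gt (Real.rpow_pos_of_pos hWe s)]
    have hSswap : ∀ ω, S ω = ∑ e, (∑ i : Fin M, Q ω i e ^ (1 + s)) * W e ^ (-s) := by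
      intro ω
      rw [hS ω, Finset.sum_comm]
      exact Finset.sum_congr rfl fun e _ => (Finset.sum_mul _ _ _).symm
    calc ∑ ω, μ ω * S ω
        = ∑ e, ∑ ω, μ ω * ((∑ i : Fin M, Q ω i e ^ (1 + s)) * W e ^ (-s)) := by
          simp only [hSswap, Finset.mul_sum]
          rw [Finset.sum_comm]
      _ ≤ ∑ e, ((∑ a, P (a, e) ^ (1 + s) * W e ^ (-s)) + W e * (M:ℝ) ^ (-s)) :=
          Finset.sum_le_sum fun e _ => hEe e
      _ = T + (M:ℝ) ^ (-s) := by
          rw [Finset.sum_add_distrib, ← Finset.sum_mul, hWsum, one_mul, hT, Finset.sum_comm]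
  -- final assembly
  have hMs1 : (M:ℝ) ^ s * (M:ℝ) ^ (-s) = 1 := by
    rw [← Real.rpow_add hMpos, add_neg_cancel, Real.rpow_zero]
  calc Real.log M - 1 / s * (M:ℝ) ^ s * T
      = (Real.log M + 1 / s) - (1 / s * (M:ℝ) ^ s) * (T + (M:ℝ) ^ (-s)) := by
        linear_combination (1 / s) * hMs1
    _ ≤ (Real.log M + 1 / s) - (1 / s * (M:ℝ) ^ s) * (∑ ω, μ ω * S ω) := by
        have h := mul_le_mul_of_nonneg_left stepB (by positivity : (0:ℝ) ≤ 1 / s * (M:ℝ) ^ s)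
        linarith
    _ = ∑ ω, μ ω * (Real.log M - (1 / s) * ((M:ℝ) ^ s * S ω - 1)) := by
        have expand : ∀ ω, μ ω * (Real.log M - (1 / s) * ((M:ℝ) ^ s * S ω - 1))
            = μ ω * (Real.log M + 1 / s) - (1 / s * (M:ℝ) ^ s) * (μ ω * S ω) := fun ω => by ring
        rw [Finset.sum_congr rfl fun ω _ => expand ω, Finset.sum_sub_distrib,
          ← Finset.sum_mul, ← Finset.mul_sum, hμ1, one_mul]
    _ ≤ ∑ ω, μ ω * (-∑ i : Fin M, ∑ e, Q ω i e * Real.log (Q ω i e / W e)) :=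
        Finset.sum_le_sum fun ω _ => mul_le_mul_of_nonneg_left (stepA ω) (hμ ω)
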